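/- The lower branch frequency w₋(φ) = 2√((26 + 4cos φ − √(474 + 448cos φ − 22cos 2φ))/(6 − 2cos φ)) is a strictly monotonically increasing function of φ on the interval (0, π). -/

import Mathlib

open Real

lemma rationalized (c : ℝ) (h1 : -1 < c) (h2 : c < 1) :
    (26 + 4 * c - Real.sqrt (496 + 448 * c - 44 * c ^ 2)) / (6 - 2 * c)
      = 30 * (1 - c) / (26 + 4 * c + Real.sqrt (496 + 448 * c - 44 * c ^ 2)) := by
  have hS : (0:ℝ) ≤ 496 + 448 * c - 44 * c ^ 2 := by nlinarith
  set s := Real.sqrt (496 + 448 * c - 44 * c ^ 2) with hsdef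
  have hs : s ^ 2 = 496 + 448 * c - 44 * c ^ 2 := Real.sq_sqrt hS
  have hsnn : 0 ≤ s := Real.sqrt_nonneg _
  have hd1 : (6 - 2 * c) ≠ 0 := by nlinarith
  have hd2 : (26 + 4 * c + s) ≠ 0 := by nlinarith
  rw [div_eq_div_iff hd1 hd2]
  nlinarith [hs]

/-- The lower branch `w₋(φ)` of the P1DG–P2 numerical dispersion relation is
strictly monotonically increasing on `(0, π)`. -/
theorem lower_branch_strictMonoOn :
    StrictMonoOn
      (fun φ : ℝ => 2 * Real.sqrt ((26 + 4 * Real.cos φ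
        - Real.sqrt (474 + 448 * Real.cos φ - 22 * Real.cos (2 * φ)))
          / (6 - 2 * Real.cos φ)))
      (Set.Ioo 0 Real.pi) := by
  intro x hx y hy hxy
  obtain ⟨hx0, hxpi⟩ := hx
  obtain ⟨hy0, hypi⟩ := hy
  have hpi := Real.pi_pos
  -- cosine bounds and ordering
  have hxI : x ∈ Set.Icc 0 Real.pi := ⟨le_of_lt hx0, le_of_lt hxpi⟩
  have hyI : y ∈ Set.Icc 0 Real.pi := ⟨le_of_lt hy0, le_of_lt hypi⟩
  have h0I : (0:ℝ) ∈ Set.Icc 0 Real.pi := ⟨le_refl 0, le_of_lt hpi⟩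
  have hpiI : Real.pi ∈ Set.Icc 0 Real.pi := ⟨le_of_lt hpi, le_refl _⟩
  have hcyx : Real.cos y < Real.cos x := Real.strictAntiOn_cos hxI hyI hxy
  have hcx1 : Real.cos x < 1 := by
    have := Real.strictAntiOn_cos h0I hxI hx0
    simpa using this
  have hcym1 : -1 < Real.cos y := by
    have := Real.strictAntiOn_cos hyI hpiI hypi
    simpa using this
  set cx := Real.cos x with hcx
  set cy := Real.cos y with hcy
  have hcxm1 : -1 < cx := lt_trans hcym1 hcyx
  have hcy1 : cy < 1 := lt_trans hcyx hcx1
  -- rewrite cos(2φ)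
  have hinx : 474 + 448 * cx - 22 * Real.cos (2 * x) = 496 + 448 * cx - 44 * cx ^ 2 := by
    rw [Real.cos_two_mul]; ring
  have hiny : 474 + 448 * cy - 22 * Real.cos (2 * y) = 496 + 448 * cy - 44 * cy ^ 2 := by
    rw [Real.cos_two_mul]; ring
  simp only
  rw [hinx, hiny, rationalized cx hcxm1 hcx1, rationalized cy hcym1 hcy1]
  -- sqrt comparisons
  have hSx : (0:ℝ) ≤ 496 + 448 * cx - 44 * cx ^ 2 := by nlinarith
  have hSy : (0:ℝ) ≤ 496 + 448 * cy - 44 * cy ^ 2 := by nlinarith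
  set sx := Real.sqrt (496 + 448 * cx - 44 * cx ^ 2) with hsx
  set sy := Real.sqrt (496 + 448 * cy - 44 * cy ^ 2) with hsy
  have hsyx : sy ≤ sx := Real.sqrt_le_sqrt (by nlinarith)
  have hsynn : 0 ≤ sy := Real.sqrt_nonneg _
  have hDy : 0 < 26 + 4 * cy + sy := by nlinarith
  have hDx : 0 < 26 + 4 * cx + sx := by nlinarith
  have hDlt : 26 + 4 * cy + sy < 26 + 4 * cx + sx := by nlinarith
  have hNx : 0 ≤ 30 * (1 - cx) := by nlinarith
  have hNlt : 30 * (1 - cx) < 30 * (1 - cy) := by nlinarith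
  have hfrac : 30 * (1 - cx) / (26 + 4 * cx + sx) < 30 * (1 - cy) / (26 + 4 * cy + sy) := by
    rw [div_lt_div_iff₀ hDx hDy]
    have h1 : 30 * (1 - cx) * (26 + 4 * cy + sy) < 30 * (1 - cy) * (26 + 4 * cy + sy) :=
      mul_lt_mul_of_pos_right hNlt hDy
    have h2 : 30 * (1 - cy) * (26 + 4 * cy + sy) ≤ 30 * (1 - cy) * (26 + 4 * cx + sx) :=
      mul_le_mul_of_nonneg_left (le_of_lt hDlt) (by nlinarith)
    linarith
  have hfx : 0 ≤ 30 * (1 - cx) / (26 + 4 * cx + sx) := div_nonneg hNx (le_of_lt hDx)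
  have := Real.sqrt_lt_sqrt hfx hfrac
  linarith
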